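/- For real numbers ω_1, …, ω_n with all partial sums Σ_{j=1}^k ω_j (1 ≤ k ≤ n) nonzero, the identity Σ_{p=1}^{n} (−1)^p / [ (∏_{m=1}^p Σ_{i=m}^p ω_i)(∏_{k=p+1}^{n} Σ_{j=p+1}^k ω_j) ] = −1/∏_{k=1}^n (Σ_{j=1}^k ω_j) holds (assuming the inner sums Σ_{i=m}^p ω_i in the denominators are also nonzero). -/

import Mathlib

open Finset Polynomial

lemma sum_nodalWeight_eq_zero {F : Type*} [Field F] {ι : Type*} [DecidableEq ι]
    (s : Finset ι) (v : ι → F) (hvs : Set.InjOn v s) (h2 : 2 ≤ s.card) :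
    ∑ i ∈ s, Lagrange.nodalWeight s v i = 0 := by
  have hb := Lagrange.sum_basis hvs (Finset.card_pos.mp (by omega))
  have hc := congrArg (fun q => Polynomial.coeff q (s.card - 1)) hb
  simp only [Polynomial.finset_sum_coeff] at hc
  rw [Finset.sum_congr rfl (fun i hi => ?_)] at hc
  · rw [hc, Polynomial.coeff_one, if_neg (by omega)]
  · rw [Lagrange.basis_eq_prod_sub_inv_mul_nodal_div hi,
      ← Lagrange.nodal_erase_eq_nodal_div hi, Polynomial.coeff_C_mul]
    have hd : (Lagrange.nodal (s.erase i) v).natDegree = s.card - 1 := by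
      rw [Lagrange.natDegree_nodal, Finset.card_erase_of_mem hi]
    rw [← hd, (Lagrange.nodal_monic).coeff_natDegree, mul_one]


lemma prod_neg_aux (s : Finset ℕ) (f : ℕ → ℝ) :
    ∏ i ∈ s, (-f i) = (-1 : ℝ) ^ s.card * ∏ i ∈ s, f i := by
  rw [Finset.prod_congr rfl fun i (_ : i ∈ s) => show -f i = (-1 : ℝ) * f i by ring,
    Finset.prod_mul_distrib, Finset.prod_const]

theorem alternating_partial_fraction_identity
    (n : ℕ) (hn : 1 ≤ n) (ω : ℕ → ℝ)
    (hsums : ∀ a b : ℕ, a ≤ b → b < n → ∑ i ∈ Finset.Icc a b, ω i ≠ 0) :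
    ∑ p ∈ Finset.Icc 1 n,
        (-1 : ℝ) ^ p /
          ((∏ m ∈ Finset.range p, ∑ i ∈ Finset.Icc m (p - 1), ω i) *
            (∏ k ∈ Finset.Icc p (n - 1), ∑ j ∈ Finset.Icc p k, ω j))
      = -1 / ∏ k ∈ Finset.range n, ∑ j ∈ Finset.range (k + 1), ω j := by
  set y : ℕ → ℝ := fun j => ∑ i ∈ Finset.range j, ω i with hy_def
  -- Icc sums as differences of partial sums
  have hIcc : ∀ a b : ℕ, a ≤ b → ∑ i ∈ Finset.Icc a b, ω i = y (b + 1) - y a := by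
    intro a b hab
    rw [← Finset.Ico_add_one_right_eq_Icc, Finset.sum_Ico_eq_sub _ (by omega)]
  have hy : ∀ a b : ℕ, a < b → b ≤ n → y b - y a ≠ 0 := by
    intro a b hab hbn
    have := hsums a (b - 1) (by omega) (by omega)
    rwa [hIcc a (b - 1) (by omega), Nat.sub_add_cancel (by omega)] at this
  have hyne : ∀ a b : ℕ, a ≠ b → a ≤ n → b ≤ n → y a - y b ≠ 0 := by
    intro a b hab han hbn
    rcases lt_or_gt_of_ne hab with h | h
    · intro hc; exact hy a b h hbn (by linarith [sub_eq_zero.mp hc])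
    · exact hy b a h han
  set s : Finset ℕ := Finset.range (n + 1) with hs_def
  have hinj : Set.InjOn y s := by
    intro a ha b hb hab
    by_contra hne
    exact hyne a b hne (by simpa [hs_def, Nat.lt_succ_iff] using ha)
      (by simpa [hs_def, Nat.lt_succ_iff] using hb) (by rw [hab]; ring)
  set D : ℕ → ℝ := fun p => ∏ m ∈ s.erase p, (y p - y m) with hD_def
  have hDw : ∀ p, Lagrange.nodalWeight s y p = (D p)⁻¹ := by
    intro p
    rw [hD_def, Lagrange.nodalWeight, ← Finset.prod_inv_distrib]
  have hDne : ∀ p ∈ s, D p ≠ 0 := by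
    intro p hp
    refine Finset.prod_ne_zero_iff.mpr fun m hm => ?_
    obtain ⟨hmp, hm⟩ := Finset.mem_erase.mp hm
    exact hyne p m hmp.symm (by simpa [hs_def, Nat.lt_succ_iff] using hp)
      (by simpa [hs_def, Nat.lt_succ_iff] using hm)
  -- split erase p into range p and Icc (p+1) n
  have hsplit : ∀ p, 1 ≤ p → p ≤ n →
      D p = (∏ m ∈ Finset.range p, (y p - y m)) * ∏ k ∈ Finset.Icc (p + 1) n, (y p - y k) := by
    intro p hp1 hpn
    simp only [hD_def]
    have hu : s.erase p = Finset.range p ∪ Finset.Icc (p + 1) n := by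
      ext x
      simp only [Finset.mem_erase, Finset.mem_union, Finset.mem_range, Finset.mem_Icc, hs_def,
        Nat.lt_succ_iff]
      omega
    rw [hu, Finset.prod_union (by
      rw [Finset.disjoint_left]; intro x hx hx'
      simp only [Finset.mem_range] at hx
      simp only [Finset.mem_Icc] at hx'
      omega)]
  -- the key identity
  have hkey : ∑ p ∈ s, (D p)⁻¹ = 0 := by
    rw [← Finset.sum_congr rfl fun p _ => hDw p]
    exact sum_nodalWeight_eq_zero s y hinj (by simp [hs_def]; omega)
  have hs01 : s = insert 0 (Finset.Icc 1 n) := by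
    ext x
    simp only [Finset.mem_insert, Finset.mem_Icc, hs_def, Finset.mem_range, Nat.lt_succ_iff]
    omega
  have hsum0 : ∑ p ∈ Finset.Icc 1 n, (D p)⁻¹ = -(D 0)⁻¹ := by
    have h0 : (0 : ℕ) ∉ Finset.Icc 1 n := by simp
    have := hkey
    rw [hs01, Finset.sum_insert h0] at this
    linarith
  -- rewrite each LHS term
  have hterm : ∀ p ∈ Finset.Icc 1 n,
      (-1 : ℝ) ^ p /
          ((∏ m ∈ Finset.range p, ∑ i ∈ Finset.Icc m (p - 1), ω i) *
            (∏ k ∈ Finset.Icc p (n - 1), ∑ j ∈ Finset.Icc p k, ω j))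
        = (-1 : ℝ) ^ n * (D p)⁻¹ := by
    intro p hp
    obtain ⟨hp1, hpn⟩ := Finset.mem_Icc.mp hp
    have hA : ∏ m ∈ Finset.range p, ∑ i ∈ Finset.Icc m (p - 1), ω i
        = ∏ m ∈ Finset.range p, (y p - y m) := by
      refine Finset.prod_congr rfl fun m hm => ?_
      rw [hIcc m (p - 1) (by simp only [Finset.mem_range] at hm; omega),
        Nat.sub_add_cancel hp1]
    have hB : ∏ k ∈ Finset.Icc p (n - 1), ∑ j ∈ Finset.Icc p k, ω j
        = ∏ k ∈ Finset.Icc (p + 1) n, (y k - y p) := by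
      rw [show Finset.Icc (p + 1) n = (Finset.Icc p (n - 1)).map
          (addRightEmbedding 1) by rw [Finset.map_add_right_Icc]; congr 1; omega,
        Finset.prod_map]
      refine Finset.prod_congr rfl fun k hk => ?_
      obtain ⟨hk1, hk2⟩ := Finset.mem_Icc.mp hk
      rw [hIcc p k hk1]
      rfl
    have hB2 : ∏ k ∈ Finset.Icc (p + 1) n, (y k - y p)
        = (-1 : ℝ) ^ (n - p) * ∏ k ∈ Finset.Icc (p + 1) n, (y p - y k) := by
      rw [← Finset.prod_congr rfl fun k _ => (neg_sub (y p) (y k)),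
        prod_neg_aux, Nat.card_Icc]
      congr 2
      omega
    rw [hA, hB, hB2, show (∏ m ∈ Finset.range p, (y p - y m)) *
        ((-1 : ℝ) ^ (n - p) * ∏ k ∈ Finset.Icc (p + 1) n, (y p - y k))
      = (-1 : ℝ) ^ (n - p) * D p by rw [hsplit p hp1 hpn]; ring]
    rw [div_mul_eq_div_div, div_eq_mul_inv, div_eq_mul_inv]
    congr 1
    rw [← inv_pow, inv_neg, inv_one]
    rw [show n = p + (n - p) by omega, pow_add]
    ring_nf
    rw [show p + (n - p) - p = n - p by omega]
  rw [Finset.sum_congr rfl hterm, ← Finset.mul_sum, hsum0]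
  -- rewrite RHS
  have hR : ∏ k ∈ Finset.range n, ∑ j ∈ Finset.range (k + 1), ω j
      = (-1 : ℝ) ^ n * D 0 := by
    have he : s.erase 0 = Finset.Icc 1 n := by
      ext x
      simp only [Finset.mem_erase, Finset.mem_Icc, hs_def, Finset.mem_range, Nat.lt_succ_iff]
      omega
    have hD0 : D 0 = ∏ k ∈ Finset.Icc 1 n, (y 0 - y k) := by simp only [hD_def, he]
    have h1 : ∏ k ∈ Finset.range n, ∑ j ∈ Finset.range (k + 1), ω j
        = ∏ k ∈ Finset.Icc 1 n, y k := by
      rw [show Finset.Icc 1 n = Finset.image Nat.succ (Finset.range n) from by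
          ext x
          simp only [Finset.mem_Icc, Finset.mem_image, Finset.mem_range, Nat.succ_eq_add_one]
          constructor
          · rintro ⟨h1, h2⟩; exact ⟨x - 1, by omega, by omega⟩
          · rintro ⟨a, ha, rfl⟩; omega,
        Finset.prod_image (fun a _ b _ h => Nat.succ_injective h)]
    rw [h1, hD0, ← Finset.prod_congr rfl fun k _ => (neg_sub (y k) (y 0)),
      prod_neg_aux, Nat.card_Icc]
    have hy0 : y 0 = 0 := by simp [hy_def]
    simp only [hy0, sub_zero]
    rw [Nat.add_sub_cancel, ← mul_assoc, ← pow_add, ← two_mul, pow_mul]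
    norm_num
  rw [hR]
  have hD0ne : D 0 ≠ 0 := hDne 0 (by simp [hs_def])
  field_simp
  rw [← pow_mul, mul_comm, pow_mul]
  norm_num
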